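/- Let q = 2ᵗ with t ≥ 1, let 𝔽_q be a finite field of order q, and let H be the point-by-line incidence matrix over 𝔽₂ of AG₁(2,q), with rows indexed by the vectors of 𝔽_q² and columns indexed by the affine lines of 𝔽_q² (cosets of 1-dimensional subspaces). Then the rank of Hᵀ·H over 𝔽₂ equals q = 2ᵗ. -/
import Mathlib


open scoped Classical

/-- The lines of the affine geometry design `AG₁(m, q)`: cosets of the one-dimensional
linear subspaces of `𝔽_q^m`. -/
def AffineLine (F : Type) [Field F] (m : ℕ) : Type :=
  {ℓ : Set (Fin m → F) // ∃ (W : Submodule F (Fin m → F)) (a : Fin m → F),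
    Module.finrank F W = 1 ∧ ℓ = (a + ·) '' (W : Set (Fin m → F))}

noncomputable instance (F : Type) [Field F] [Fintype F] (m : ℕ) :
    Fintype (AffineLine F m) := by
  unfold AffineLine; exact Fintype.ofFinite _

section Aux

variable {F : Type} [Field F] [Fintype F]

open Module Matrix

set_option linter.unusedSectionVars false

lemma mem_coset {V : Type*} [AddCommGroup V] [Module F V] (S : Submodule F V) (a x : V) :
    x ∈ (a + ·) '' (S : Set V) ↔ x - a ∈ S := by
  constructor
  · rintro ⟨s, hs, rfl⟩; simpa using hs
  · intro h; exact ⟨x - a, h, by simp⟩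

/-- Uniqueness of the direction of a coset. -/
lemma coset_dir_unique {V : Type*} [AddCommGroup V] [Module F V]
    (W U : Submodule F V) (a b : V)
    (h : (a + ·) '' (W : Set V) = (b + ·) '' (U : Set V)) : W = U := by
  have hab : a - b ∈ U := by
    rw [← mem_coset U b a, ← h, mem_coset]
    simpa using W.zero_mem
  ext x
  have key : a + x - a ∈ W ↔ a + x - b ∈ U := by
    rw [← mem_coset W, ← mem_coset U, h]
  have h1 : a + x - a = x := by abel
  have h2 : a + x - b = x + (a - b) := by abel
  rw [h1, h2] at key
  rw [key]
  constructor
  · intro hx; simpa using U.sub_mem hx hab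
  · intro hx; exact U.add_mem hx hab

/-- The set of directions: one-dimensional subspaces of `F²`. -/
def Dir (F : Type) [Field F] : Type :=
  {W : Submodule F (Fin 2 → F) // Module.finrank F W = 1}

noncomputable instance : Fintype (Dir F) := by
  have : Finite (Submodule F (Fin 2 → F)) :=
    Finite.of_injective (fun W => (W : Set (Fin 2 → F))) SetLike.coe_injective
  unfold Dir; exact Fintype.ofFinite _

/-- The direction of an affine line. -/
noncomputable def dir (ℓ : AffineLine F 2) : Dir F :=
  ⟨ℓ.2.choose, ℓ.2.choose_spec.choose_spec.1⟩

lemma dir_spec (ℓ : AffineLine F 2) :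
    ∃ a, ℓ.1 = (a + ·) '' ((dir ℓ).1 : Set (Fin 2 → F)) :=
  ⟨ℓ.2.choose_spec.choose, ℓ.2.choose_spec.choose_spec.2⟩

lemma dir_eq (ℓ : AffineLine F 2) (W : Submodule F (Fin 2 → F)) (a : Fin 2 → F)
    (h : ℓ.1 = (a + ·) '' (W : Set (Fin 2 → F))) : (dir ℓ).1 = W := by
  obtain ⟨b, hb⟩ := dir_spec ℓ
  exact coset_dir_unique _ _ b a (hb ▸ h)

/-- The canonical line with a given direction (through the origin). -/
def secLine (d : Dir F) : AffineLine F 2 :=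
  ⟨(d.1 : Set (Fin 2 → F)), d.1, 0, d.2, by
    ext x; rw [mem_coset]; simp only [sub_zero]; exact Iff.rfl⟩

lemma dir_secLine (d : Dir F) : dir (secLine d) = d := by
  apply Subtype.ext
  exact dir_eq _ d.1 0 (by ext x; rw [mem_coset]; simp only [sub_zero]; exact Iff.rfl)

/-- Cardinality of a line is `q`. -/
lemma card_line (ℓ : AffineLine F 2) :
    Nat.card ℓ.1 = Fintype.card F := by
  obtain ⟨a, ha⟩ := dir_spec ℓ
  rw [ha]
  have hinj : Function.Injective (a + ·) := fun x y h => by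
    simpa using add_left_cancel h
  have e : ((a + ·) '' ((dir ℓ).1 : Set (Fin 2 → F))) ≃ ((dir ℓ).1 : Set (Fin 2 → F)) :=
    (Equiv.Set.image _ _ hinj).symm
  rw [Nat.card_congr e]
  have h2 : Nat.card ((dir ℓ).1 : Set (Fin 2 → F)) = Nat.card (dir ℓ).1 := rfl
  rw [h2, Nat.card_eq_fintype_card, card_eq_pow_finrank (K := F), (dir ℓ).2, pow_one]

/-- Two distinct parallel lines are disjoint. -/
lemma parallel_disjoint (ℓ ℓ' : AffineLine F 2) (hd : dir ℓ = dir ℓ') (hne : ℓ ≠ ℓ') :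
    ℓ.1 ∩ ℓ'.1 = ∅ := by
  obtain ⟨a, ha⟩ := dir_spec ℓ
  obtain ⟨b, hb⟩ := dir_spec ℓ'
  rw [hd] at ha
  set W := ((dir ℓ').1 : Submodule F (Fin 2 → F)) with hW
  by_contra h
  obtain ⟨x, hx, hx'⟩ := Set.nonempty_iff_ne_empty.2 h
  rw [ha, mem_coset] at hx
  rw [hb, mem_coset] at hx'
  have hba : b - a ∈ W := by
    have := W.sub_mem hx hx'
    have h3 : x - a - (x - b) = b - a := by abel
    rwa [h3] at this
  apply hne
  apply Subtype.ext
  rw [ha, hb]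
  ext y
  rw [mem_coset, mem_coset]
  constructor
  · intro hy
    have := W.sub_mem hy hba
    have h3 : y - a - (b - a) = y - b := by abel
    rwa [h3] at this
  · intro hy
    have := W.add_mem hy hba
    have h3 : y - b + (b - a) = y - a := by abel
    rwa [h3] at this

/-- Two distinct one-dimensional subspaces of `F²` satisfy `W ⊓ U = ⊥` and `W ⊔ U = ⊤`. -/
lemma dim_one_inf_sup (W U : Submodule F (Fin 2 → F))
    (hW : finrank F W = 1) (hU : finrank F U = 1) (hne : W ≠ U) :
    W ⊓ U = ⊥ ∧ W ⊔ U = ⊤ := by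
  have hinf : W ⊓ U = ⊥ := by
    by_contra h
    have h1 : 1 ≤ finrank F ↥(W ⊓ U) := by
      rw [Nat.one_le_iff_ne_zero]
      intro h0
      exact h (Submodule.finrank_eq_zero.mp h0)
    have hle : finrank F ↥(W ⊓ U) ≤ finrank F W :=
      Submodule.finrank_mono inf_le_left
    have heq : finrank F ↥(W ⊓ U) = finrank F W := le_antisymm hle (hW ▸ h1)
    have h2 : W ⊓ U = W := Submodule.eq_of_le_of_finrank_eq inf_le_left heq
    have hWU : W ≤ U := h2 ▸ inf_le_right
    exact hne (Submodule.eq_of_le_of_finrank_eq hWU (hW.trans hU.symm))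
  refine ⟨hinf, ?_⟩
  apply Submodule.eq_top_of_finrank_eq
  have hh := Submodule.finrank_sup_add_finrank_inf_eq W U
  rw [hinf, hW, hU] at hh
  simp only [finrank_bot, add_zero] at hh
  rw [hh, Module.finrank_fin_fun]

/-- Non-parallel lines meet in exactly one point. -/
lemma nonparallel_inter (ℓ ℓ' : AffineLine F 2) (hd : dir ℓ ≠ dir ℓ') :
    ∃ x, ℓ.1 ∩ ℓ'.1 = {x} := by
  obtain ⟨a, ha⟩ := dir_spec ℓ
  obtain ⟨b, hb⟩ := dir_spec ℓ'
  set W := ((dir ℓ).1 : Submodule F (Fin 2 → F))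
  set U := ((dir ℓ').1 : Submodule F (Fin 2 → F))
  have hne : W ≠ U := fun h => hd (Subtype.ext h)
  obtain ⟨hinf, hsup⟩ := dim_one_inf_sup W U (dir ℓ).2 (dir ℓ').2 hne
  have hba : b - a ∈ W ⊔ U := hsup ▸ Submodule.mem_top
  obtain ⟨w, hw, u, hu, hwu⟩ := Submodule.mem_sup.mp hba
  refine ⟨a + w, ?_⟩
  ext x
  simp only [Set.mem_inter_iff, Set.mem_singleton_iff, ha, hb, mem_coset]
  constructor
  · rintro ⟨hxa, hxb⟩
    have m1 : x - (a + w) ∈ W := by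
      have := W.sub_mem hxa hw
      have h3 : x - a - w = x - (a + w) := by abel
      rwa [h3] at this
    have m2 : x - (a + w) ∈ U := by
      have hmem := U.add_mem hxb hu
      have h3 : x - b + u = x - (a + w) := by
        have hu' : u = b - a - w := by rw [← hwu]; abel
        rw [hu']; abel
      rwa [h3] at hmem
    have : x - (a + w) ∈ W ⊓ U := Submodule.mem_inf.2 ⟨m1, m2⟩
    rw [hinf, Submodule.mem_bot, sub_eq_zero] at this
    exact this
  · rintro rfl
    constructor
    · have h3 : a + w - a = w := by abel
      rw [h3]; exact hw
    · have hb' : b = a + w + u := by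
        rw [show a + w + u = a + (w + u) from by abel, hwu]; abel
      have h3 : a + w - b = -u := by rw [hb']; abel
      rw [h3]; exact U.neg_mem hu

instance : Nonempty (Dir F) := by
  have h1 : (Pi.single 0 1 : Fin 2 → F) ≠ 0 := by
    intro h
    have := congrFun h 0
    simp at this
  exact ⟨⟨Submodule.span F {Pi.single 0 1}, finrank_span_singleton h1⟩⟩

lemma span_eq_dir_iff (d : Dir F) (v : Fin 2 → F) (hv : v ≠ 0) :
    Submodule.span F {v} = d.1 ↔ v ∈ d.1 := by
  constructor
  · intro h; rw [← h]; exact Submodule.mem_span_singleton_self v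
  · intro h
    apply Submodule.eq_of_le_of_finrank_eq
    · rw [Submodule.span_le, Set.singleton_subset_iff]; exact h
    · rw [finrank_span_singleton hv, d.2]

lemma card_dir : Fintype.card (Dir F) = Fintype.card F + 1 := by
  set q := Fintype.card F with hq
  have hq2 : 2 ≤ q := Fintype.one_lt_card
  -- the fibering map
  let g : {v : Fin 2 → F // v ≠ 0} → Dir F := fun v =>
    ⟨Submodule.span F {v.1}, finrank_span_singleton v.2⟩
  have hg : ∀ v : {v : Fin 2 → F // v ≠ 0}, ∀ d : Dir F, g v = d ↔ v.1 ∈ d.1 := by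
    intro v d
    rw [show (g v = d) ↔ (Submodule.span F {v.1} = d.1) from
      ⟨fun h => congrArg Subtype.val h, fun h => Subtype.ext h⟩]
    exact span_eq_dir_iff d v.1 v.2
  have hcard1 : Fintype.card {v : Fin 2 → F // v ≠ 0} = q ^ 2 - 1 := by
    rw [Fintype.card_subtype_compl, Fintype.card_subtype_eq, Fintype.card_fun,
      Fintype.card_fin]
  have hfiber : ∀ d : Dir F, Fintype.card {v : {v : Fin 2 → F // v ≠ 0} // g v = d}
      = q - 1 := by
    intro d
    have e : {v : {v : Fin 2 → F // v ≠ 0} // g v = d} ≃ {w : d.1 // w ≠ 0} :=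
      { toFun := fun v => ⟨⟨v.1.1, (hg v.1 d).mp v.2⟩,
          fun h => v.1.2 (congrArg Subtype.val h)⟩
        invFun := fun w => ⟨⟨w.1.1, fun h => w.2 (Subtype.ext h)⟩,
          (hg _ d).mpr w.1.2⟩
        left_inv := fun v => by ext; rfl
        right_inv := fun w => by ext; rfl }
    rw [Fintype.card_congr e, Fintype.card_subtype_compl, Fintype.card_subtype_eq]
    congr 1
    rw [card_eq_pow_finrank (K := F), d.2, pow_one]
  have hsum : Fintype.card {v : Fin 2 → F // v ≠ 0}
      = Fintype.card (Dir F) * (q - 1) := by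
    rw [← Fintype.card_congr (Equiv.sigmaFiberEquiv g), Fintype.card_sigma]
    simp only [hfiber, Finset.sum_const, Finset.card_univ, smul_eq_mul]
  have key : Fintype.card (Dir F) * (q - 1) = (q + 1) * (q - 1) := by
    rw [← hsum, hcard1]
    have gen : ∀ m : ℕ, 2 ≤ m → m ^ 2 - 1 = (m + 1) * (m - 1) := by
      intro m hm
      obtain ⟨k, rfl⟩ := Nat.exists_eq_add_of_le hm
      have h1 : (2 + k) ^ 2 = k * k + 4 * k + 4 := by ring
      have h2 : (2 + k + 1) * (2 + k - 1) = (3 + k) * (1 + k) := by congr 1 <;> omega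
      have h3 : (3 + k) * (1 + k) = k * k + 4 * k + 3 := by ring
      omega
    exact gen q hq2
  exact Nat.eq_of_mul_eq_mul_right (by omega) key

/-- The parallel-class indicator matrix. -/
noncomputable def Pmat (F : Type) [Field F] [Fintype F] :
    Matrix (AffineLine F 2) (Dir F) (ZMod 2) :=
  fun ℓ d => if dir ℓ = d then 1 else 0

/-- The "all ones minus identity" matrix on directions. -/
noncomputable def Nmat (F : Type) [Field F] [Fintype F] : Matrix (Dir F) (Dir F) (ZMod 2) :=
  fun d d' => if d = d' then 0 else 1

lemma Pmat_mulVecLin_injective : Function.Injective (Pmat F).mulVecLin := by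
  intro y z h
  funext d
  have h1 : ∀ (x : Dir F → ZMod 2) ℓ, (Pmat F).mulVecLin x ℓ = x (dir ℓ) := by
    intro x ℓ
    simp [Matrix.mulVecLin_apply, Matrix.mulVec, dotProduct, Pmat, ite_mul]
  have := congrFun h (secLine d)
  rwa [h1, h1, dir_secLine] at this

lemma Pmat_transpose_mulVecLin_surjective :
    Function.Surjective (Pmat F)ᵀ.mulVecLin := by
  intro y
  refine ⟨fun ℓ => if ℓ = secLine (dir ℓ) then y (dir ℓ) else 0, ?_⟩
  funext d
  rw [Matrix.mulVecLin_apply]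
  show ∑ ℓ, (Pmat F)ᵀ d ℓ * _ = y d
  rw [Finset.sum_eq_single (secLine d)]
  · simp [Pmat, Matrix.transpose_apply, dir_secLine]
  · intro ℓ _ hne
    simp only [Pmat, Matrix.transpose_apply]
    by_cases h1 : dir ℓ = d
    · by_cases h2 : ℓ = secLine (dir ℓ)
      · exfalso; apply hne; rw [h2, h1]
      · simp [h2]
    · simp [h1]
  · intro h; exact absurd (Finset.mem_univ _) h

lemma rank_mul_left_of_inj {m n o R : Type*} [Fintype n] [Fintype o] [DecidableEq n]
    [Field R] (A : Matrix m n R) (B : Matrix n o R)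
    (h : Function.Injective A.mulVecLin) : (A * B).rank = B.rank := by
  rw [Matrix.rank, Matrix.rank, Matrix.mulVecLin_mul, LinearMap.range_comp]
  exact ((Submodule.equivMapOfInjective A.mulVecLin h _).symm).finrank_eq

lemma rank_mul_right_of_surj {m n o R : Type*} [Fintype n] [Fintype o]
    [Field R] (A : Matrix m n R) (B : Matrix n o R)
    (h : Function.Surjective B.mulVecLin) : (A * B).rank = A.rank := by
  rw [Matrix.rank, Matrix.rank, Matrix.mulVecLin_mul,
    LinearMap.range_comp_of_range_eq_top _ (LinearMap.range_eq_top.2 h)]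

lemma Nmat_mulVec (x : Dir F → ZMod 2) (d : Dir F) :
    (Nmat F).mulVec x d = (∑ d', x d') + x d := by
  have hN : ∀ d d' : Dir F, Nmat F d d' = 1 + (if d = d' then 1 else 0) := by
    intro d d'
    unfold Nmat
    split <;> decide
  simp only [Matrix.mulVec, dotProduct, hN, add_mul, one_mul, ite_mul, zero_mul]
  rw [Finset.sum_add_distrib, Finset.sum_ite_eq]
  simp

lemma rank_Nmat (t : ℕ) (ht : 1 ≤ t) (hF : Fintype.card F = 2 ^ t) :
    (Nmat F).rank = 2 ^ t := by
  have hpow : ((2 ^ t : ℕ) : ZMod 2) = 0 := by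
    rw [ZMod.natCast_eq_zero_iff]
    exact dvd_pow_self 2 (by omega)
  have hone_ne : (fun _ => 1 : Dir F → ZMod 2) ≠ 0 := by
    intro h
    obtain ⟨d⟩ := (inferInstance : Nonempty (Dir F))
    have := congrFun h d
    simp at this
  have hker : LinearMap.ker (Nmat F).mulVecLin
      = Submodule.span (ZMod 2) {(fun _ => 1 : Dir F → ZMod 2)} := by
    ext x
    rw [LinearMap.mem_ker, Submodule.mem_span_singleton]
    constructor
    · intro hx
      refine ⟨∑ d', x d', ?_⟩
      funext d
      have hxd := congrFun hx d
      rw [Matrix.mulVecLin_apply, Nmat_mulVec] at hxd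
      have hx2 : x d = ∑ d', x d' := by
        have h2 : (∑ d', x d') + (x d + x d) = x d := by
          rw [← add_assoc, hxd]; simp
        rw [CharTwo.add_self_eq_zero, add_zero] at h2
        exact h2.symm
      simp [hx2]
    · rintro ⟨c, rfl⟩
      funext d
      rw [Matrix.mulVecLin_apply, Nmat_mulVec]
      simp only [Pi.smul_apply, smul_eq_mul, mul_one, Pi.zero_apply]
      rw [Finset.sum_const, Finset.card_univ, card_dir, hF]
      rw [nsmul_eq_mul, Nat.cast_add, Nat.cast_one, hpow, zero_add, one_mul]
      exact CharTwo.add_self_eq_zero c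
  have hrank := LinearMap.finrank_range_add_finrank_ker (Nmat F).mulVecLin
  rw [hker, finrank_span_singleton hone_ne, Module.finrank_pi, card_dir, hF] at hrank
  have : (Nmat F).rank = finrank (ZMod 2) (LinearMap.range (Nmat F).mulVecLin) := rfl
  omega

end Aux

/-- for `q = 2ᵗ`, the point-by-line incidence matrix `H` over `𝔽₂` of
`AG₁(2, q)` satisfies `rank(Hᵀ · H) = q = 2ᵗ` over `𝔽₂`. -/
theorem stmt_10 (t : ℕ) (ht : 1 ≤ t)
    (F : Type) [Field F] [Fintype F] (hF : Fintype.card F = 2 ^ t)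
    (H : Matrix (Fin 2 → F) (AffineLine F 2) (ZMod 2))
    (hH : ∀ p ℓ, H p ℓ = if p ∈ ℓ.1 then 1 else 0) :
    (H.transpose * H).rank = 2 ^ t := by
  have hfac : H.transpose * H = Pmat F * Nmat F * (Pmat F).transpose := by
    ext ℓ ℓ'
    have hrhs : (Pmat F * Nmat F * (Pmat F).transpose) ℓ ℓ' = Nmat F (dir ℓ) (dir ℓ') := by
      rw [Matrix.mul_assoc]
      simp [Matrix.mul_apply, Pmat, Matrix.transpose_apply, ite_mul, mul_ite,
        zero_mul, mul_zero, one_mul, mul_one, Finset.sum_ite_eq, Finset.sum_ite_eq']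
    have hlhs : (H.transpose * H) ℓ ℓ'
        = ((Nat.card (ℓ.1 ∩ ℓ'.1 : Set (Fin 2 → F))) : ZMod 2) := by
      rw [Matrix.mul_apply]
      simp only [Matrix.transpose_apply, hH]
      have hterm : ∀ p, (if p ∈ ℓ.1 then (1 : ZMod 2) else 0) * (if p ∈ ℓ'.1 then 1 else 0)
          = if p ∈ ℓ.1 ∩ ℓ'.1 then 1 else 0 := by
        intro p
        by_cases h1 : p ∈ ℓ.1 <;> by_cases h2 : p ∈ ℓ'.1 <;>
          simp [h1, h2, Set.mem_inter_iff]
      simp only [hterm]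
      rw [Finset.sum_boole]
      congr 1
      rw [Nat.card_coe_set_eq, Set.ncard_eq_toFinset_card',
        ← Set.filter_mem_univ_eq_toFinset]
    rw [hlhs, hrhs]
    by_cases hd : dir ℓ = dir ℓ'
    · by_cases he : ℓ = ℓ'
      · subst he
        rw [Set.inter_self, card_line, hF]
        have h0 : ((2 ^ t : ℕ) : ZMod 2) = 0 := by
          rw [ZMod.natCast_eq_zero_iff]
          exact dvd_pow_self 2 (by omega)
        rw [h0]
        simp [Nmat]
      · rw [parallel_disjoint ℓ ℓ' hd he]
        rw [Nat.card_coe_set_eq, Set.ncard_empty]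
        simp [Nmat, hd]
    · obtain ⟨x, hx⟩ := nonparallel_inter ℓ ℓ' hd
      rw [hx, Nat.card_coe_set_eq, Set.ncard_singleton]
      simp [Nmat, hd]
  rw [hfac, rank_mul_right_of_surj _ _ Pmat_transpose_mulVecLin_surjective,
    rank_mul_left_of_inj _ _ Pmat_mulVecLin_injective, rank_Nmat t ht hF]
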